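/- For all real numbers $\mu, \lambda$ with $(\mu,\lambda)\neq(0,0)$, $$\int_{\mathbb{R}^2} \frac{dx\,dy}{\big((\lambda^2+\mu^2)(1+x^2+y^2) + 2\mu\lambda\, xy\big)^{3/2}} = \frac{2\pi}{\sqrt{(\lambda^2+\mu^2)(\lambda^4+\lambda^2\mu^2+\mu^4)}}.$$ -/

import Mathlib

open MeasureTheory Real Filter Topology

lemma rpow_three_halves {x : ℝ} (hx : 0 ≤ x) :
    x ^ ((3:ℝ)/2) = Real.sqrt x ^ 3 := by
  rw [Real.sqrt_eq_rpow, ← Real.rpow_natCast (x ^ ((1:ℝ)/2)) 3, ← Real.rpow_mul hx]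
  norm_num

lemma hasDeriv_F {C : ℝ} (hC : 0 < C) (y : ℝ) :
    HasDerivAt (fun y : ℝ => y / (C * Real.sqrt (y^2 + C)))
      (1 / (y^2 + C) ^ ((3:ℝ)/2)) y := by
  have hS : 0 < y^2 + C := by positivity
  have hs : 0 < Real.sqrt (y^2 + C) := Real.sqrt_pos.2 hS
  have h1 : HasDerivAt (fun y : ℝ => y^2 + C) (2*y) y := by
    simpa [mul_comm] using ((hasDerivAt_pow 2 y).add_const C)
  have h2 := (h1.sqrt hS.ne')
  have h3 := h2.const_mul C
  have h4 := (hasDerivAt_id y).div h3 (by positivity)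
  refine (h4 : HasDerivAt (fun y : ℝ => y / (C * Real.sqrt (y^2 + C))) _ y).congr_deriv ?_
  symm
  rw [rpow_three_halves hS.le]
  have hsq : Real.sqrt (y^2+C) ^ 2 = y^2 + C := Real.sq_sqrt hS.le
  field_simp
  simp only [id]
  linear_combination (-1 : ℝ) * hsq

lemma tendsto_F_top {C : ℝ} (hC : 0 < C) :
    Tendsto (fun y : ℝ => y / (C * Real.sqrt (y^2 + C))) atTop (𝓝 (1/C)) := by
  have h1 : Tendsto (fun y : ℝ => C / (y^2 + C)) atTop (𝓝 0) := by
    apply Tendsto.div_atTop tendsto_const_nhds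
    exact tendsto_atTop_add_const_right _ C (tendsto_pow_atTop (by norm_num))
  have h0 : Tendsto (fun y : ℝ => 1 - C/(y^2+C)) atTop (𝓝 1) := by
    simpa using tendsto_const_nhds.sub h1
  have hmain : Tendsto (fun y : ℝ => Real.sqrt (1 - C/(y^2+C)) / C) atTop (𝓝 (1/C)) := by
    have h2 := (Real.continuous_sqrt.tendsto 1).comp h0
    simpa using h2.div_const C
  apply hmain.congr'
  filter_upwards [eventually_gt_atTop 0] with y hy
  have hS : 0 < y^2 + C := by positivity
  have h3 : 1 - C/(y^2+C) = y^2/(y^2+C) := by field_simp; ring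
  rw [h3, Real.sqrt_div (sq_nonneg y), Real.sqrt_sq hy.le, div_div, mul_comm]

lemma tendsto_F_bot {C : ℝ} (hC : 0 < C) :
    Tendsto (fun y : ℝ => y / (C * Real.sqrt (y^2 + C))) atBot (𝓝 (-(1/C))) := by
  have h := ((tendsto_F_top hC).comp tendsto_neg_atBot_atTop).neg
  apply h.congr
  intro y
  simp only [Function.comp]
  rw [neg_sq]
  ring

lemma integrable_A {C : ℝ} (hC : 0 < C) :
    Integrable fun y : ℝ => 1 / (y^2 + C) ^ ((3:ℝ)/2) := by
  have hcont : Continuous fun y : ℝ => 1 / (y^2 + C) ^ ((3:ℝ)/2) := by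
    apply Continuous.div continuous_const
    · exact ((continuous_pow 2).add continuous_const).rpow_const fun y => Or.inr (by norm_num)
    · intro y
      exact (Real.rpow_pos_of_pos (by positivity) _).ne'
  apply (integrable_inv_one_add_sq.const_mul ((min 1 C * Real.sqrt C)⁻¹)).mono'
    hcont.aestronglyMeasurable
  filter_upwards with y
  have hS : 0 < y^2 + C := by positivity
  have hb : min 1 C * (1 + y^2) * Real.sqrt C ≤ (y^2+C) ^ ((3:ℝ)/2) := by
    rw [rpow_three_halves hS.le]
    have h1 : min 1 C * (1 + y^2) ≤ y^2 + C := by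
      rcases min_cases 1 C with ⟨hm, hm'⟩ | ⟨hm, hm'⟩ <;> rw [hm] <;> nlinarith
    have h2 : Real.sqrt C ≤ Real.sqrt (y^2+C) := Real.sqrt_le_sqrt (by nlinarith)
    calc min 1 C * (1+y^2) * Real.sqrt C ≤ (y^2+C) * Real.sqrt (y^2+C) := by
          apply mul_le_mul h1 h2 (Real.sqrt_nonneg _) hS.le
      _ = Real.sqrt (y^2+C)^3 := by
          rw [show Real.sqrt (y^2+C)^3 = Real.sqrt (y^2+C)^2 * Real.sqrt (y^2+C) from by ring,
            Real.sq_sqrt hS.le]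
  rw [Real.norm_eq_abs, abs_of_nonneg (by positivity), one_div]
  have hmin : 0 < min 1 C := lt_min one_pos hC
  have heq : (min 1 C * Real.sqrt C)⁻¹ * (1+y^2)⁻¹ = (min 1 C * (1+y^2) * Real.sqrt C)⁻¹ := by
    rw [← mul_inv]
    ring_nf
  rw [heq]
  exact inv_anti₀ (by positivity) hb

lemma integral_A {C : ℝ} (hC : 0 < C) :
    ∫ y : ℝ, 1 / (y^2 + C) ^ ((3:ℝ)/2) = 2 / C := by
  have h := MeasureTheory.integral_of_hasDerivAt_of_tendsto (hasDeriv_F hC)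
    (integrable_A hC) (tendsto_F_bot hC) (tendsto_F_top hC)
  rw [h]
  ring

lemma integral_B {k : ℝ} (hk : 0 < k) :
    ∫ x : ℝ, (1 + (k*x)^2)⁻¹ = Real.pi / k := by
  have h := MeasureTheory.Measure.integral_comp_mul_left (fun y : ℝ => (1 + y^2)⁻¹) k
  rw [h, integral_univ_inv_one_add_sq, smul_eq_mul, abs_of_pos (inv_pos.2 hk), inv_mul_eq_div]

lemma main_gen {a b : ℝ} (ha : 0 < a) (hab : b^2 < a^2) :
    ∫ p : ℝ × ℝ, 1 / (a*(1+p.1^2+p.2^2) + 2*b*p.1*p.2) ^ ((3:ℝ)/2)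
      = 2 * Real.pi / Real.sqrt (a * (a^2 - b^2)) := by
  have hD : 0 < a^2 - b^2 := by linarith
  have hsa : 0 < Real.sqrt a := Real.sqrt_pos.2 ha
  have hsD : 0 < Real.sqrt (a^2-b^2) := Real.sqrt_pos.2 hD
  have hk : 0 < Real.sqrt (a^2-b^2) / a := by positivity
  have hQ : ∀ x y : ℝ, 0 < a*(1+x^2+y^2) + 2*b*x*y := by
    intro x y
    nlinarith [sq_nonneg (a*x + b*y), sq_nonneg y, mul_pos ha ha, sq_nonneg x]
  set Cf : ℝ → ℝ := fun x => 1 + (Real.sqrt (a^2-b^2) / a * x)^2 with hCf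
  have hCpos : ∀ x, 0 < Cf x := fun x => by positivity
  have hcube : Real.sqrt a ^ 3 = a * Real.sqrt a := by
    rw [show Real.sqrt a ^ 3 = Real.sqrt a ^ 2 * Real.sqrt a from by ring, Real.sq_sqrt ha.le]
  have hpt : ∀ x y : ℝ, 1 / (a*(1+x^2+y^2) + 2*b*x*y) ^ ((3:ℝ)/2)
      = (1/(a*Real.sqrt a)) * (1 / ((y + (b/a)*x)^2 + Cf x) ^ ((3:ℝ)/2)) := by
    intro x y
    have hT : 0 < (y + (b/a)*x)^2 + Cf x := by positivity
    have hQeq : a*(1+x^2+y^2) + 2*b*x*y = a * ((y + (b/a)*x)^2 + Cf x) := by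
      have h1 : Real.sqrt (a^2-b^2) ^ 2 = a^2 - b^2 := Real.sq_sqrt hD.le
      simp only [hCf]
      field_simp
      linear_combination (-(x^2)) * h1
    rw [hQeq, Real.mul_rpow ha.le hT.le, rpow_three_halves ha.le, hcube]
    simp only [one_div, mul_inv]
  have hinner : ∀ x : ℝ, (∫ y : ℝ, (1/(a*Real.sqrt a)) * (1 / ((y + (b/a)*x)^2 + Cf x) ^ ((3:ℝ)/2)))
      = (2/(a*Real.sqrt a)) * (Cf x)⁻¹ := by
    intro x
    rw [MeasureTheory.integral_const_mul]
    rw [show (fun y : ℝ => 1 / ((y + (b/a)*x)^2 + Cf x) ^ ((3:ℝ)/2))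
        = fun y : ℝ => (fun z : ℝ => 1/(z^2 + Cf x)^((3:ℝ)/2)) (y + (b/a)*x) from rfl]
    rw [integral_add_right_eq_self (fun z : ℝ => 1/(z^2 + Cf x)^((3:ℝ)/2)) ((b/a)*x)]
    rw [integral_A (hCpos x)]
    ring
  have hint_y : ∀ x : ℝ, Integrable fun y : ℝ =>
      (1/(a*Real.sqrt a)) * (1 / ((y + (b/a)*x)^2 + Cf x) ^ ((3:ℝ)/2)) := by
    intro x
    apply Integrable.const_mul
    have h1 := (measurePreserving_add_right volume ((b/a)*x)).integrable_comp
      (integrable_A (hCpos x)).aestronglyMeasurable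
    exact h1.2 (integrable_A (hCpos x))
  have hFcont : Continuous fun p : ℝ × ℝ =>
      1 / (a*(1+p.1^2+p.2^2) + 2*b*p.1*p.2) ^ ((3:ℝ)/2) := by
    apply Continuous.div continuous_const
    · apply Continuous.rpow_const
      · fun_prop
      · exact fun p => Or.inr (by norm_num)
    · exact fun p => (Real.rpow_pos_of_pos (hQ p.1 p.2) _).ne'
  have houter_int : Integrable fun x : ℝ => (2/(a*Real.sqrt a)) * (Cf x)⁻¹ := by
    apply Integrable.const_mul
    exact integrable_inv_one_add_sq.comp_mul_left' hk.ne'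
  have hFint : Integrable (fun p : ℝ × ℝ =>
      1 / (a*(1+p.1^2+p.2^2) + 2*b*p.1*p.2) ^ ((3:ℝ)/2)) := by
    rw [MeasureTheory.Measure.volume_eq_prod]
    apply (integrable_prod_iff hFcont.aestronglyMeasurable).2
    constructor
    · filter_upwards with x
      exact (hint_y x).congr (Filter.Eventually.of_forall fun y => (hpt x y).symm)
    · apply houter_int.congr
      filter_upwards with x
      have : (fun y : ℝ => ‖1 / (a*(1+x^2+y^2) + 2*b*x*y) ^ ((3:ℝ)/2)‖)
          = fun y : ℝ => (1/(a*Real.sqrt a)) * (1 / ((y + (b/a)*x)^2 + Cf x) ^ ((3:ℝ)/2)) := by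
        funext y
        rw [Real.norm_eq_abs, abs_of_nonneg (le_of_lt (div_pos one_pos (Real.rpow_pos_of_pos (hQ x y) _))), hpt x y]
      rw [this, hinner x]
  rw [MeasureTheory.Measure.volume_eq_prod]
  rw [MeasureTheory.Measure.volume_eq_prod] at hFint
  rw [MeasureTheory.integral_prod _ hFint]
  have hstep : (fun x : ℝ => ∫ y : ℝ, 1 / (a*(1+x^2+y^2) + 2*b*x*y) ^ ((3:ℝ)/2))
      = fun x : ℝ => (2/(a*Real.sqrt a)) * (Cf x)⁻¹ := by
    funext x
    simp_rw [hpt x]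
    exact hinner x
  rw [hstep, MeasureTheory.integral_const_mul]
  have : (∫ x : ℝ, (Cf x)⁻¹) = Real.pi / (Real.sqrt (a^2-b^2) / a) := integral_B hk
  rw [this]
  rw [Real.sqrt_mul ha.le, div_div_eq_mul_div, div_mul_div_comm, mul_comm,
    div_eq_div_iff (by positivity) (by positivity)]
  ring

/-- the archimedean density integral
`∫_{ℝ²} dx dy / ((λ²+μ²)(1+x²+y²) + 2μλxy)^{3/2}
  = 2π / √((λ²+μ²)(λ⁴+λ²μ²+μ⁴))` for `(μ,λ) ≠ (0,0)`. -/
theorem stmt_16 (μ lam : ℝ) (h : (μ, lam) ≠ (0, 0)) :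
    ∫ p : ℝ × ℝ,
        1 / ((lam ^ 2 + μ ^ 2) * (1 + p.1 ^ 2 + p.2 ^ 2) + 2 * μ * lam * p.1 * p.2) ^
          ((3 : ℝ) / 2) =
      2 * Real.pi /
        Real.sqrt ((lam ^ 2 + μ ^ 2) * (lam ^ 4 + lam ^ 2 * μ ^ 2 + μ ^ 4)) := by
  have ha : 0 < lam ^ 2 + μ ^ 2 := by
    rcases eq_or_ne μ 0 with hμ | hμ
    · have hl : lam ≠ 0 := fun hl => h (by rw [hμ, hl])
      positivity
    · positivity
  have hab : (μ * lam) ^ 2 < (lam ^ 2 + μ ^ 2) ^ 2 := by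
    nlinarith [sq_nonneg (lam ^ 2 - μ ^ 2), mul_pos ha ha]
  have hmg := main_gen (a := lam ^ 2 + μ ^ 2) (b := μ * lam) ha hab
  have heq : ∀ p : ℝ × ℝ,
      (lam ^ 2 + μ ^ 2) * (1 + p.1 ^ 2 + p.2 ^ 2) + 2 * μ * lam * p.1 * p.2
        = (lam ^ 2 + μ ^ 2) * (1 + p.1 ^ 2 + p.2 ^ 2) + 2 * (μ * lam) * p.1 * p.2 :=
    fun p => by ring
  simp_rw [heq]
  rw [hmg, show (lam ^ 2 + μ ^ 2) * ((lam ^ 2 + μ ^ 2) ^ 2 - (μ * lam) ^ 2)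
    = (lam ^ 2 + μ ^ 2) * (lam ^ 4 + lam ^ 2 * μ ^ 2 + μ ^ 4) from by ring]
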